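/- Let ℏ be a nonzero complex number and let V be a finite-dimensional indecomposable A-module such that the operator E − ℏ·id_V is nilpotent, where E = XY + YX. Then dim V = 2n for some n ≥ 1 and V is isomorphic to V^ℏ(n). (Lemma 1.4: up to the change of parity, all indecomposable representations with central character concentrated at ℏ ≠ 0 are the V^ℏ(n).) -/

import Mathlib

/-- A subspace invariant under the two operators `X`, `Y` (i.e. a submodule for
the module structure they define). -/
def AInvariant {V : Type} [AddCommGroup V] [Module ℂ V] (X Y : Module.End ℂ V)
    (p : Submodule ℂ V) : Prop :=
  ∀ v ∈ p, X v ∈ p ∧ Y v ∈ p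

/-- A module (given by a vector space with two operators `X`, `Y`) is
indecomposable if it is nonzero and is not the internal direct sum of two
nonzero invariant subspaces. -/
def AIndecomposable {V : Type} [AddCommGroup V] [Module ℂ V]
    (X Y : Module.End ℂ V) : Prop :=
  (∃ v : V, v ≠ 0) ∧ ∀ p q : Submodule ℂ V, AInvariant X Y p → AInvariant X Y q →
    IsCompl p q → p = ⊥ ∨ q = ⊥

/-- An isomorphism of modules given by pairs of endomorphisms: a linear
equivalence intertwining the respective actions. -/
def AModIso {V W : Type} [AddCommGroup V] [Module ℂ V] [AddCommGroup W] [Module ℂ W]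
    (X Y : Module.End ℂ V) (X' Y' : Module.End ℂ W) : Prop :=
  ∃ e : V ≃ₗ[ℂ] W, (∀ v, e (X v) = X' (e v)) ∧ (∀ v, e (Y v) = Y' (e v))

/-- The `n × n` Jordan block `J_n(ℏ)` with eigenvalue `ℏ`. -/
def jordan (n : ℕ) (ℏ : ℂ) : Matrix (Fin n) (Fin n) ℂ :=
  Matrix.of fun i j : Fin n =>
    if i = j then ℏ else if (j : ℕ) = (i : ℕ) + 1 then 1 else 0

/-- The action of `X` on the module `V^ℏ(n) = ℂⁿ ⊕ ℂⁿ`: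
`X(u,v) = (J_n(ℏ)v, 0)`. -/
noncomputable def VhX (n : ℕ) (ℏ : ℂ) : Module.End ℂ ((Fin n → ℂ) × (Fin n → ℂ)) :=
  LinearMap.prod
    ((Matrix.toLin' (jordan n ℏ)).comp (LinearMap.snd ℂ (Fin n → ℂ) (Fin n → ℂ)))
    (0 : ((Fin n → ℂ) × (Fin n → ℂ)) →ₗ[ℂ] (Fin n → ℂ))

/-- The action of `Y` on the module `V^ℏ(n) = ℂⁿ ⊕ ℂⁿ`: `Y(u,v) = (0, u)`. -/
noncomputable def VhY (n : ℕ) : Module.End ℂ ((Fin n → ℂ) × (Fin n → ℂ)) :=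
  LinearMap.prod (0 : ((Fin n → ℂ) × (Fin n → ℂ)) →ₗ[ℂ] (Fin n → ℂ))
    (LinearMap.fst ℂ (Fin n → ℂ) (Fin n → ℂ))

open Module in
theorem jordan_classify {W : Type} [AddCommGroup W] [Module ℂ W] [FiniteDimensional ℂ W]
    (ℏ : ℂ) (f : Module.End ℂ W) (hW : ∃ w : W, w ≠ 0)
    (hnil : IsNilpotent (f - ℏ • 1))
    (hind : ∀ p q : Submodule ℂ W, (∀ w ∈ p, f w ∈ p) → (∀ w ∈ q, f w ∈ q) →
      IsCompl p q → p = ⊥ ∨ q = ⊥) :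
    ∃ n : ℕ, 1 ≤ n ∧ ∃ e : W ≃ₗ[ℂ] (Fin n → ℂ),
      ∀ w, e (f w) = Matrix.toLin' (jordan n ℏ) (e w) := by
  classical
  obtain ⟨w0, hw0⟩ := hW
  set N : Module.End ℂ W := f - ℏ • 1 with hNdef
  have hex : ∃ m : ℕ, N ^ m = 0 := hnil
  set n := Nat.find hex with hn
  have hn0 : N ^ n = 0 := Nat.find_spec hex
  have hnpos : 1 ≤ n := by
    rcases Nat.eq_zero_or_pos n with h | h
    · exfalso
      have := hn0
      rw [h, pow_zero] at this
      have : w0 = 0 := by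
        have := LinearMap.congr_fun this w0
        simpa using this
      exact hw0 this
    · exact h
  have hnm : ∀ m : ℕ, n ≤ m → (N ^ m : Module.End ℂ W) = 0 := by
    intro m hm
    have : N ^ m = N ^ n * N ^ (m - n) := by
      rw [← pow_add]; congr 1; omega
    rw [this, hn0, zero_mul]
  have hlt : N ^ (n - 1) ≠ 0 := Nat.find_min hex (by omega)
  obtain ⟨v, hv⟩ : ∃ v : W, (N ^ (n - 1)) v ≠ 0 := by
    by_contra h
    push_neg at h
    exact hlt (LinearMap.ext fun x => by simpa using h x)
  obtain ⟨φ, hφ⟩ : ∃ φ : Module.Dual ℂ W, φ ((N ^ (n - 1)) v) ≠ 0 := by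
    by_contra h
    push_neg at h
    exact hv ((Module.forall_dual_apply_eq_zero_iff ℂ _).mp h)
  -- basis candidates
  set b : Fin n → W := fun j => (N ^ (n - 1 - (j : ℕ))) v with hb
  -- the map T
  set T : (Fin n → ℂ) →ₗ[ℂ] W :=
    { toFun := fun a => ∑ j, a j • b j
      map_add' := by intro a c; simp [add_smul, Finset.sum_add_distrib]
      map_smul' := by intro c a; simp [smul_smul, Finset.smul_sum] } with hT
  have hTapply : ∀ a : Fin n → ℂ, T a = ∑ j, a j • b j := fun a => rfl
  -- key vanishing lemma
  have key : ∀ a : Fin n → ℂ, (∀ m : ℕ, φ ((N ^ m) (T a)) = 0) → a = 0 := by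
    intro a ha
    by_contra hne
    have hS : (Finset.univ.filter fun j => a j ≠ 0).Nonempty := by
      rcases Function.ne_iff.mp hne with ⟨j, hj⟩
      exact ⟨j, by simpa using hj⟩
    set j₀ := Finset.max' _ hS with hj₀def
    have hj₀ : a j₀ ≠ 0 := by
      have := Finset.max'_mem _ hS
      simpa using this
    have hle : ∀ j : Fin n, a j ≠ 0 → j ≤ j₀ := fun j hj =>
      Finset.le_max' _ j (by simpa using hj)
    have hcalc : φ ((N ^ (j₀ : ℕ)) (T a)) = a j₀ * φ ((N ^ (n - 1)) v) := by
      rw [hTapply, map_sum, map_sum]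
      have : ∀ j : Fin n, φ ((N ^ (j₀ : ℕ)) (a j • b j)) =
          a j * φ ((N ^ ((j₀ : ℕ) + (n - 1 - (j : ℕ)))) v) := by
        intro j
        rw [map_smul, map_smul, hb]
        have : (N ^ (j₀ : ℕ)) ((N ^ (n - 1 - (j : ℕ))) v)
            = (N ^ ((j₀ : ℕ) + (n - 1 - (j : ℕ)))) v := by
          rw [pow_add]; rfl
        rw [this]; rfl
      rw [Finset.sum_congr rfl fun j _ => this j]
      rw [Finset.sum_eq_single j₀]
      · congr 2
        have h2 := j₀.isLt
        have he : (j₀ : ℕ) + (n - 1 - (j₀ : ℕ)) = n - 1 := by omega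
        rw [he]
      · intro j _ hj
        rcases eq_or_ne (a j) 0 with h | h
        · simp [h]
        · have hjlt : (j : ℕ) < (j₀ : ℕ) := by
            have := hle j h
            rcases lt_or_eq_of_le this with h' | h'
            · exact h'
            · exact absurd h' hj
          have hj2 := j.isLt
          have : (N ^ ((j₀ : ℕ) + (n - 1 - (j : ℕ)))) v = 0 := by
            rw [hnm _ (by omega)]; rfl
          simp [this]
      · intro h; exact absurd (Finset.mem_univ j₀) h
    rw [ha (j₀ : ℕ)] at hcalc
    exact hφ (by
      rcases mul_eq_zero.mp hcalc.symm with h | h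
      · exact absurd h hj₀
      · exact h)

  -- T is injective
  have hTinj : Function.Injective T := by
    rw [← LinearMap.ker_eq_bot, LinearMap.ker_eq_bot']
    intro a ha
    exact key a (by intro m; rw [ha]; simp)
  -- basis vectors lie in range of T
  have hbT : ∀ i : Fin n, T (Pi.single i 1) = b i := by
    intro i
    rw [hTapply]
    rw [Finset.sum_eq_single i]
    · simp
    · intro j _ hj; simp [Pi.single_apply, hj]
    · intro h; exact absurd (Finset.mem_univ i) h
  set U : Submodule ℂ W := LinearMap.range T with hUdef
  set C : Submodule ℂ W := ⨅ m : ℕ, LinearMap.ker (φ ∘ₗ (N ^ m)) with hCdef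
  have hmemC : ∀ w : W, w ∈ C ↔ ∀ m : ℕ, φ ((N ^ m) w) = 0 := by
    intro w
    simp [hCdef, Submodule.mem_iInf, LinearMap.mem_ker]
  -- U and C are disjoint
  have hdisj : U ⊓ C = ⊥ := by
    rw [Submodule.eq_bot_iff]
    rintro w ⟨⟨a, rfl⟩, hwC⟩
    rw [key a ((hmemC _).mp hwC)]
    simp
  -- finrank U = n
  have hfinU : finrank ℂ U = n := by
    rw [hUdef, LinearMap.finrank_range_of_inj hTinj]
    simp
  -- finrank C ≥ finrank W - n
  set Φ : W →ₗ[ℂ] (Fin n → ℂ) := LinearMap.pi (fun i : Fin n => φ ∘ₗ (N ^ (i : ℕ))) with hΦdef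
  have hCker : C = LinearMap.ker Φ := by
    apply le_antisymm
    · intro w hw
      rw [LinearMap.mem_ker]
      funext i
      exact ((hmemC w).mp hw) (i : ℕ)
    · intro w hw
      rw [hmemC]
      intro m
      rcases lt_or_ge m n with h | h
      · have := congr_fun (LinearMap.mem_ker.mp hw) ⟨m, h⟩
        simpa [hΦdef] using this
      · rw [hnm m h]; simp
  have hfinC : finrank ℂ W ≤ finrank ℂ C + n := by
    have h1 := LinearMap.finrank_range_add_finrank_ker Φ
    have h2 : finrank ℂ (LinearMap.range Φ) ≤ n := by
      have := Submodule.finrank_le (LinearMap.range Φ)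
      simpa using this
    rw [hCker]
    omega
  -- U ⊔ C = ⊤
  have hsup : U ⊔ C = ⊤ := by
    apply Submodule.eq_top_of_finrank_eq
    have h3 := Submodule.finrank_sup_add_finrank_inf_eq U C
    rw [hdisj] at h3
    simp only [finrank_bot, add_zero] at h3
    have h4 : finrank ℂ (U ⊔ C : Submodule ℂ W) ≤ finrank ℂ W := Submodule.finrank_le _
    omega
  -- invariance of U and C under f
  have hfb2 : ∀ j : Fin n, f (b j) = ℏ • b j + (N ^ (n - (j : ℕ))) v := by
    intro j
    have : f = ℏ • (1 : Module.End ℂ W) + N := by rw [hNdef]; abel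
    rw [this]
    have h2 : (N ^ (n - (j : ℕ))) v = N (b j) := by
      rw [hb]
      have : N ((N ^ (n - 1 - (j : ℕ))) v) = (N ^ (n - 1 - (j : ℕ) + 1)) v := by
        rw [pow_succ']; rfl
      rw [this]
      congr 2
      have := j.isLt
      omega
    rw [h2]
    rfl
  have hbU : ∀ j : Fin n, b j ∈ U := fun j => ⟨Pi.single j 1, hbT j⟩
  have hNvU : ∀ j : Fin n, (N ^ (n - (j : ℕ))) v ∈ U := by
    intro j
    rcases Nat.eq_zero_or_pos (j : ℕ) with h | h
    · have : n - (j : ℕ) = n := by omega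
      rw [this, hn0]
      simp
    · have hjn := j.isLt
      have : (N ^ (n - (j : ℕ))) v = b ⟨(j : ℕ) - 1, by omega⟩ := by
        rw [hb]
        congr 2
        simp only [Fin.val_mk]
        omega
      rw [this]
      exact hbU _
  have hUinv : ∀ w ∈ U, f w ∈ U := by
    rintro w ⟨a, rfl⟩
    rw [hTapply, map_sum]
    apply Submodule.sum_mem
    intro j _
    rw [map_smul]
    apply Submodule.smul_mem
    rw [hfb2 j]
    exact Submodule.add_mem _ (Submodule.smul_mem _ _ (hbU j)) (hNvU j)
  have hCinv : ∀ w ∈ C, f w ∈ C := by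
    intro w hw
    rw [hmemC]
    intro m
    have hfw : f w = ℏ • w + N w := by
      have : f = ℏ • (1 : Module.End ℂ W) + N := by rw [hNdef]; abel
      rw [this]; rfl
    rw [hfw, map_add, map_smul, map_add, map_smul]
    have h1 := (hmemC w).mp hw m
    have h2 : (N ^ m) (N w) = (N ^ (m + 1)) w := by rw [pow_succ]; rfl
    have h3 := (hmemC w).mp hw (m + 1)
    rw [h2]
    rw [h1, h3]
    simp
  -- U is nonzero
  have hUne : U ≠ ⊥ := by
    intro h
    have hb0 : b ⟨0, by omega⟩ ∈ U := hbU _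
    apply hv
    have h0 : b ⟨0, by omega⟩ = (N ^ (n - 1)) v := by simp [hb]
    rw [← h0]
    exact (Submodule.eq_bot_iff U).mp h _ hb0
  -- conclude U = ⊤
  have hCbot : C = ⊥ := by
    rcases hind U C hUinv hCinv ⟨disjoint_iff.mpr hdisj, codisjoint_iff.mpr hsup⟩ with h | h
    · exact absurd h hUne
    · exact h
  have hUtop : U = ⊤ := by
    rw [hCbot, sup_bot_eq] at hsup
    exact hsup
  have hTsurj : Function.Surjective T := by
    rw [← LinearMap.range_eq_top, ← hUdef]
    exact hUtop
  set Te : (Fin n → ℂ) ≃ₗ[ℂ] W := LinearEquiv.ofBijective T ⟨hTinj, hTsurj⟩ with hTe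
  refine ⟨n, hnpos, Te.symm, ?_⟩
  -- intertwining: suffices f (T a) = T (J a)
  have hfbJ : ∀ k : Fin n, f (b k) = ∑ i, (jordan n ℏ) i k • b i := by
    intro k
    rw [hfb2 k]
    have hsplit : ∀ i : Fin n, (jordan n ℏ) i k • b i =
        (if i = k then ℏ else 0) • b i + (if (k : ℕ) = (i : ℕ) + 1 then (1:ℂ) else 0) • b i := by
      intro i
      rcases eq_or_ne i k with h | h
      · subst h
        have : ¬ ((i : ℕ) = (i : ℕ) + 1) := by omega
        simp [jordan, this]
      · simp [jordan, h]
    rw [Finset.sum_congr rfl fun i _ => hsplit i, Finset.sum_add_distrib]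
    congr 1
    · rw [Finset.sum_eq_single k]
      · simp
      · intro i _ hi; simp [hi]
      · intro h; exact absurd (Finset.mem_univ k) h
    · rcases Nat.eq_zero_or_pos (k : ℕ) with h | h
      · rw [Finset.sum_eq_zero]
        · have : n - (k : ℕ) = n := by omega
          rw [this, hn0]; simp
        · intro i _
          have : ¬ ((k : ℕ) = (i : ℕ) + 1) := by omega
          simp [this]
      · have hkn := k.isLt
        rw [Finset.sum_eq_single ⟨(k : ℕ) - 1, by omega⟩]
        · have h1 : (k : ℕ) = ((⟨(k : ℕ) - 1, by omega⟩ : Fin n) : ℕ) + 1 := by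
            simp; omega
          rw [if_pos h1, one_smul, hb]
          have : (N ^ (n - (k : ℕ))) v = (N ^ (n - 1 - (((⟨(k : ℕ) - 1, by omega⟩ : Fin n)) : ℕ))) v := by
            congr 2
            simp
            omega
          exact this
        · intro i _ hi
          have : ¬ ((k : ℕ) = (i : ℕ) + 1) := by
            intro hcon
            apply hi
            apply Fin.ext
            simp
            omega
          simp [this]
        · intro h; exact absurd (Finset.mem_univ _) h
  have hTJ : ∀ a : Fin n → ℂ, f (T a) = T (Matrix.toLin' (jordan n ℏ) a) := by
    intro a
    rw [hTapply, map_sum]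
    have lhs : ∑ j, f (a j • b j) = ∑ j, a j • ∑ i, (jordan n ℏ) i j • b i := by
      apply Finset.sum_congr rfl
      intro j _
      rw [map_smul, hfbJ j]
    rw [lhs]
    rw [hTapply]
    have rhs : ∀ i : Fin n, (Matrix.toLin' (jordan n ℏ) a) i • b i
        = ∑ k, (jordan n ℏ i k * a k) • b i := by
      intro i
      rw [Matrix.toLin'_apply]
      rw [Matrix.mulVec, dotProduct]
      rw [Finset.sum_smul]
    rw [Finset.sum_congr rfl fun i _ => rhs i]
    rw [Finset.sum_comm]
    apply Finset.sum_congr rfl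
    intro j _
    rw [Finset.smul_sum]
    apply Finset.sum_congr rfl
    intro i _
    rw [smul_smul, mul_comm]
  intro w
  obtain ⟨a, rfl⟩ := Te.surjective w
  rw [LinearEquiv.symm_apply_apply]
  show Te.symm (f (T a)) = Matrix.toLin' (jordan n ℏ) a
  rw [hTJ a]
  exact Te.symm_apply_apply (Matrix.toLin' (jordan n ℏ) a)


/-- Lemma 1.4 (ungraded form): let `ℏ ≠ 0` and let `V` be a finite-dimensional
indecomposable `A`-module (operators `X`, `Y` with `X² = Y² = 0`) such that
`E − ℏ·id` is nilpotent, where `E = XY + YX`. Then `dim V = 2n` for some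
`n ≥ 1` and `V` is isomorphic to `V^ℏ(n)`. -/
theorem indecomposable_with_central_character (ℏ : ℂ) (hℏ : ℏ ≠ 0)
    (V : Type) [AddCommGroup V] [Module ℂ V] [FiniteDimensional ℂ V]
    (X Y : Module.End ℂ V) (hX : X * X = 0) (hY : Y * Y = 0)
    (hind : AIndecomposable X Y)
    (hnil : IsNilpotent (X * Y + Y * X - ℏ • (1 : Module.End ℂ V))) :
    ∃ n : ℕ, 1 ≤ n ∧ Module.finrank ℂ V = 2 * n ∧ AModIso X Y (VhX n ℏ) (VhY n) := by
  classical
  set E : Module.End ℂ V := X * Y + Y * X with hE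
  -- commutation
  have hEX : Commute E X := by
    have h : E * X - X * E = Y * (X * X) - (X * X) * Y := by rw [hE]; noncomm_ring
    rw [hX] at h
    simp only [mul_zero, zero_mul, sub_zero] at h
    rw [Commute, SemiconjBy, ← sub_eq_zero]
    exact h
  have hEY : Commute E Y := by
    have h : E * Y - Y * E = X * (Y * Y) - (Y * Y) * X := by rw [hE]; noncomm_ring
    rw [hY] at h
    simp only [mul_zero, zero_mul, sub_zero] at h
    rw [Commute, SemiconjBy, ← sub_eq_zero]
    exact h
  -- E is a unit
  have hsmul_unit : IsUnit (ℏ • (1 : Module.End ℂ V)) := by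
    refine ⟨⟨ℏ • 1, ℏ⁻¹ • 1, ?_, ?_⟩, rfl⟩
    · rw [smul_mul_smul_comm]; simp [hℏ]
    · rw [smul_mul_smul_comm]; simp [hℏ]
  have hEunit : IsUnit E := by
    have hcom : Commute (E - ℏ • (1 : Module.End ℂ V)) (ℏ • (1 : Module.End ℂ V)) := by
      rw [Commute, SemiconjBy]
      simp [mul_smul_comm, smul_mul_assoc]
    have := IsNilpotent.isUnit_add_left_of_commute hnil hsmul_unit hcom
    simpa using this
  obtain ⟨u, hu⟩ := hEunit
  set F : Module.End ℂ V := ↑u⁻¹ with hF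
  have hFE : F * E = 1 := by rw [hF, ← hu]; exact u.inv_mul
  have hEF : E * F = 1 := by rw [hF, ← hu]; exact u.mul_inv
  have hFX : Commute F X := by
    apply Commute.units_inv_left
    rw [hu]; exact hEX
  have hFY : Commute F Y := by
    apply Commute.units_inv_left
    rw [hu]; exact hEY
  -- pointwise commutation facts
  have hEXp : ∀ v : V, X (E v) = E (X v) := fun v => by
    have := LinearMap.congr_fun hEX.symm.eq v
    simpa using this
  have hEYp : ∀ v : V, Y (E v) = E (Y v) := fun v => by
    have := LinearMap.congr_fun hEY.symm.eq v
    simpa using this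
  have hFXp : ∀ v : V, X (F v) = F (X v) := fun v => by
    have := LinearMap.congr_fun hFX.symm.eq v
    simpa using this
  have hFYp : ∀ v : V, Y (F v) = F (Y v) := fun v => by
    have := LinearMap.congr_fun hFY.symm.eq v
    simpa using this
  have hFEp : ∀ v : V, F (E v) = v := fun v => by
    have := LinearMap.congr_fun hFE v
    simpa using this
  have hXXp : ∀ v : V, X (X v) = 0 := fun v => by
    have := LinearMap.congr_fun hX v
    simpa using this
  have hYYp : ∀ v : V, Y (Y v) = 0 := fun v => by
    have := LinearMap.congr_fun hY v
    simpa using this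
  have hEp : ∀ v : V, E v = X (Y v) + Y (X v) := fun v => by rw [hE]; rfl
  -- the kernel of X
  set K : Submodule ℂ V := LinearMap.ker X with hK
  have hEK : ∀ w ∈ K, E w ∈ K := by
    intro w hw
    rw [hK, LinearMap.mem_ker] at hw ⊢
    rw [hEXp w, hw, map_zero]
  set E₀ : Module.End ℂ K := E.restrict hEK with hE₀
  have hE₀coe : ∀ w : K, (E₀ w : V) = E (w : V) := fun w => rfl
  -- the linear map L : K × K → V
  set L : (K × K) →ₗ[ℂ] V :=
    K.subtype.comp (LinearMap.fst ℂ K K) + (Y ∘ₗ K.subtype).comp (LinearMap.snd ℂ K K)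
    with hL
  have hLapply : ∀ p : K × K, L p = (p.1 : V) + Y (p.2 : V) := fun p => rfl
  -- L is bijective
  have hLinj : Function.Injective L := by
    rw [← LinearMap.ker_eq_bot, LinearMap.ker_eq_bot']
    intro p hp
    rw [hLapply] at hp
    have h1 : X ((p.1 : V) + Y (p.2 : V)) = 0 := by rw [hp, map_zero]
    rw [map_add] at h1
    have h2 : X (p.1 : V) = 0 := p.1.2
    rw [h2, zero_add] at h1
    have h3 : E (p.2 : V) = 0 := by
      rw [hEp]
      have h4 : X (p.2 : V) = 0 := p.2.2
      rw [h1, h4, map_zero, add_zero]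
    have h5 : (p.2 : V) = 0 := by
      have := hFEp (p.2 : V)
      rw [h3, map_zero] at this
      exact this.symm
    have h6 : (p.1 : V) = 0 := by
      rw [h5, map_zero, add_zero] at hp
      exact hp
    have : p = 0 := by
      apply Prod.ext
      · exact Subtype.ext h6
      · exact Subtype.ext h5
    exact this
  have hLsurj : Function.Surjective L := by
    intro w
    have hu : X (X (F (Y w))) = 0 := hXXp _
    have hv : X (F (X w)) = 0 := by rw [hFXp, hXXp, map_zero]
    refine ⟨(⟨X (F (Y w)), hu⟩, ⟨F (X w), hv⟩), ?_⟩
    rw [hLapply]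
    show X (F (Y w)) + Y (F (X w)) = w
    rw [hFXp (Y w), hFYp (X w), ← map_add, ← hEp, hFEp]
  set Le : (K × K) ≃ₗ[ℂ] V := LinearEquiv.ofBijective L ⟨hLinj, hLsurj⟩ with hLe
  have hLecoe : ∀ p : K × K, Le p = L p := fun p => rfl
  -- intertwining at K-level
  have hLX : ∀ p : K × K, X (L p) = L (E₀ p.2, 0) := by
    intro p
    rw [hLapply, hLapply]
    show X ((p.1 : V) + Y (p.2 : V)) = (E₀ p.2 : V) + Y ((0 : K) : V)
    rw [map_add]
    have h2 : X (p.1 : V) = 0 := p.1.2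
    have h4 : X (p.2 : V) = 0 := p.2.2
    rw [h2, zero_add, hE₀coe]
    rw [hEp (p.2 : V), h4, map_zero, add_zero]
    show X (Y (p.2:V)) = X (Y (p.2:V)) + Y ((0:K):V)
    rw [Submodule.coe_zero, map_zero, add_zero]
  have hLY : ∀ p : K × K, Y (L p) = L (0, p.1) := by
    intro p
    rw [hLapply, hLapply]
    show Y ((p.1 : V) + Y (p.2 : V)) = ((0:K) : V) + Y ((p.1 : V))
    rw [map_add, hYYp, add_zero, Submodule.coe_zero, zero_add]
  -- nilpotency descends
  have hnilK : IsNilpotent (E₀ - ℏ • (1 : Module.End ℂ K)) := by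
    obtain ⟨k, hk⟩ := hnil
    refine ⟨k, ?_⟩
    have hcoe : ∀ (m : ℕ) (w : K),
        (((E₀ - ℏ • (1 : Module.End ℂ K)) ^ m) w : V)
          = ((E - ℏ • (1 : Module.End ℂ V)) ^ m) (w : V) := by
      intro m
      induction m with
      | zero => intro w; simp
      | succ m ih =>
        intro w
        rw [pow_succ', pow_succ']
        show ((((E₀ - ℏ • 1)) (((E₀ - ℏ • (1:Module.End ℂ K)) ^ m) w)) : V)
          = (E - ℏ • 1) (((E - ℏ • (1:Module.End ℂ V)) ^ m) (w : V))
        rw [← ih w]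
        set z := ((E₀ - ℏ • (1:Module.End ℂ K)) ^ m) w with hz
        show (((E₀ - ℏ • 1) z) : V) = (E - ℏ • 1) (z : V)
        have h5 : (E₀ - ℏ • 1) z = E₀ z - ℏ • z := rfl
        rw [h5]
        push_cast
        rw [hE₀coe]
        rfl
    apply LinearMap.ext
    intro w
    apply Subtype.ext
    have := hcoe k w
    rw [hk] at this
    simpa using this
  -- K is nonzero
  have hKne : ∃ w : K, w ≠ 0 := by
    obtain ⟨v0, hv0⟩ := hind.1
    set p := Le.symm v0 with hp
    have hpne : p ≠ 0 := by
      intro h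
      apply hv0
      have : Le p = v0 := Le.apply_symm_apply v0
      rw [h, map_zero] at this
      exact this.symm
    rcases eq_or_ne p.1 0 with h1 | h1
    · refine ⟨p.2, ?_⟩
      intro h2
      exact hpne (Prod.ext h1 h2)
    · exact ⟨p.1, h1⟩
  -- indecomposability descends
  have hindK : ∀ p q : Submodule ℂ K, (∀ w ∈ p, E₀ w ∈ p) → (∀ w ∈ q, E₀ w ∈ q) →
      IsCompl p q → p = ⊥ ∨ q = ⊥ := by
    intro p q hp hq hpq
    set p' : Submodule ℂ V := (p.prod p).map (Le : (K × K) →ₗ[ℂ] V) with hp'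
    set q' : Submodule ℂ V := (q.prod q).map (Le : (K × K) →ₗ[ℂ] V) with hq'
    have hinv : ∀ (r : Submodule ℂ K), (∀ w ∈ r, E₀ w ∈ r) →
        AInvariant X Y ((r.prod r).map (Le : (K × K) →ₗ[ℂ] V)) := by
      intro r hr
      rintro w ⟨z, hz, rfl⟩
      obtain ⟨hz1, hz2⟩ := Submodule.mem_prod.mp hz
      constructor
      · refine ⟨(E₀ z.2, 0), Submodule.mem_prod.mpr ⟨hr _ hz2, Submodule.zero_mem r⟩, ?_⟩
        show Le (E₀ z.2, 0) = X (Le z)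
        rw [hLecoe, hLecoe, hLX z]
      · refine ⟨(0, z.1), Submodule.mem_prod.mpr ⟨Submodule.zero_mem r, hz1⟩, ?_⟩
        show Le (0, z.1) = Y (Le z)
        rw [hLecoe, hLecoe, hLY z]
    have hcompl : IsCompl p' q' := by
      constructor
      · rw [disjoint_iff]
        rw [hp', hq']
        rw [Submodule.eq_bot_iff]
        rintro w ⟨⟨z1, hz1, rfl⟩, ⟨z2, hz2, hz⟩⟩
        have hzz : z2 = z1 := hLinj (by exact hz)
        subst hzz
        have hmem : z2 ∈ (p.prod p) ⊓ (q.prod q) := ⟨hz1, hz2⟩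
        rw [Submodule.prod_inf_prod, disjoint_iff.mp hpq.disjoint] at hmem
        have hz0 : z2 = 0 := by simpa using hmem
        rw [hz0, map_zero]
      · rw [codisjoint_iff, hp', hq', ← Submodule.map_sup]
        have hsup2 : (p.prod p) ⊔ (q.prod q) = ⊤ := by
          rw [eq_top_iff]
          rintro ⟨x1, x2⟩ -
          have h1 : x1 ∈ p ⊔ q := by rw [codisjoint_iff.mp hpq.codisjoint]; trivial
          have h2 : x2 ∈ p ⊔ q := by rw [codisjoint_iff.mp hpq.codisjoint]; trivial
          obtain ⟨a, ha, b, hb, hab⟩ := Submodule.mem_sup.mp h1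
          obtain ⟨c, hc, d, hd, hcd⟩ := Submodule.mem_sup.mp h2
          apply Submodule.mem_sup.mpr
          exact ⟨(a, c), Submodule.mem_prod.mpr ⟨ha, hc⟩, (b, d),
            Submodule.mem_prod.mpr ⟨hb, hd⟩, by rw [Prod.mk_add_mk, hab, hcd]⟩
        rw [hsup2, Submodule.map_top]
        rw [LinearMap.range_eq_top]
        exact hLsurj
    have hbot : ∀ (r : Submodule ℂ K), (r.prod r).map (Le : (K × K) →ₗ[ℂ] V) = ⊥ → r = ⊥ := by
      intro r hr
      rw [Submodule.eq_bot_iff]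
      intro x hx
      have hmem : Le ((x, 0) : K × K) ∈ (r.prod r).map (Le : (K × K) →ₗ[ℂ] V) :=
        ⟨(x, 0), Submodule.mem_prod.mpr ⟨hx, Submodule.zero_mem r⟩, rfl⟩
      rw [hr, Submodule.mem_bot] at hmem
      have hz0 : ((x, 0) : K × K) = 0 := hLinj (by rw [hLecoe] at hmem; rw [hmem, map_zero])
      have := congr_arg Prod.fst hz0
      simpa using this
    rcases hind.2 p' q' (hinv p hp) (hinv q hq) hcompl with h | h
    · exact Or.inl (hbot p h)
    · exact Or.inr (hbot q h)
  -- apply the classification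
  obtain ⟨n, hn1, e, he⟩ := jordan_classify ℏ E₀ hKne hnilK hindK
  refine ⟨n, hn1, ?_, ?_⟩
  · have h1 : Module.finrank ℂ V = Module.finrank ℂ (K × K) := Le.symm.finrank_eq
    have h2 : Module.finrank ℂ K = n := by
      rw [e.finrank_eq]
      simp
    rw [h1, Module.finrank_prod, h2, two_mul]
  · refine ⟨Le.symm.trans (e.prodCongr e), ?_, ?_⟩
    · intro v
      obtain ⟨z, rfl⟩ := Le.surjective v
      have h1 : X (Le z) = Le (E₀ z.2, 0) := by rw [hLecoe, hLecoe]; exact hLX z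
      rw [h1]
      simp only [LinearEquiv.trans_apply, LinearEquiv.symm_apply_apply]
      show (e (E₀ z.2), e 0) = VhX n ℏ (e z.1, e z.2)
      rw [map_zero, he z.2]
      show (Matrix.toLin' (jordan n ℏ) (e z.2), (0 : Fin n → ℂ)) = VhX n ℏ (e z.1, e z.2)
      simp [VhX]
    · intro v
      obtain ⟨z, rfl⟩ := Le.surjective v
      have h1 : Y (Le z) = Le (0, z.1) := by rw [hLecoe, hLecoe]; exact hLY z
      rw [h1]
      simp only [LinearEquiv.trans_apply, LinearEquiv.symm_apply_apply]
      show (e 0, e z.1) = VhY n (e z.1, e z.2)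
      rw [map_zero]
      simp [VhY]
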